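/- Let G be a group, T ≤ G a subgroup, g ∈ T, and G_g the centralizer of g. For w, w' ∈ N_G(T), the double cosets satisfy G_g w T = G_g w' T if and only if w' w⁻¹ ∈ N_{G_g}(T). Consequently the set G_g N_G(T)/T decomposes as a disjoint union of the sets G_g w T / T over a set of representatives w of N_{G_g}(T)\N_G(T). -/

import Mathlib

/-- The double coset `G_g w T`, for `G_g` the centralizer of `g` and `w ∈ N_G(T)`. -/
def doubleCoset {G : Type*} [Group G] (T : Subgroup G) (g w : G) : Set G :=
  {x : G | ∃ c ∈ Subgroup.centralizer {g}, ∃ t ∈ T, x = c * w * t}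

private lemma dc_eq_of_cond {G : Type*} [Group G] (T : Subgroup G) (g w w' : G)
    (h1 : w' * w⁻¹ ∈ Subgroup.centralizer {g}) (h2 : w' * w⁻¹ ∈ Subgroup.normalizer (T : Set G)) :
    doubleCoset T g w = doubleCoset T g w' := by
  ext x
  constructor
  · rintro ⟨c, hc, t, ht, rfl⟩
    exact ⟨c * (w' * w⁻¹)⁻¹, mul_mem hc (inv_mem h1), t, ht, by group⟩
  · rintro ⟨c, hc, t, ht, rfl⟩
    exact ⟨c * (w' * w⁻¹), mul_mem hc h1, t, ht, by group⟩

private lemma dc_mem_cent {G : Type*} [Group G] (T : Subgroup G) (g : G)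
    (hTg : ∀ t ∈ T, t * g = g * t) (w w' : G) (hw : w ∈ Subgroup.normalizer (T : Set G))
    (h : w' ∈ doubleCoset T g w) :
    w' * w⁻¹ ∈ Subgroup.centralizer {g} := by
  obtain ⟨c, hc, t, ht, rfl⟩ := h
  have htw : w * t * w⁻¹ ∈ T := (Subgroup.mem_normalizer_iff.mp hw t).mp ht
  have : c * w * t * w⁻¹ = c * (w * t * w⁻¹) := by group
  rw [this]
  refine mul_mem hc ?_
  rw [Subgroup.mem_centralizer_iff]
  intro x hx
  simp only [Set.mem_singleton_iff] at hx
  subst hx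
  exact (hTg _ htw).symm

/-- For `w, w' ∈ N_G(T)` and `g ∈ T` (with `T` centralizing `g`), the double cosets
`G_g w T` and `G_g w' T` coincide if and only if `w' w⁻¹ ∈ N_{G_g}(T)`; consequently they
are equal or disjoint, giving the decomposition of `G_g N_G(T)/T` as a disjoint union over
representatives of `N_{G_g}(T) \ N_G(T)`. -/
theorem doubleCoset_eq_iff {G : Type*} [Group G] (T : Subgroup G) (g : G) (hg : g ∈ T)
    (hTg : ∀ t ∈ T, t * g = g * t)
    (w w' : G) (hw : w ∈ Subgroup.normalizer (T : Set G)) (hw' : w' ∈ Subgroup.normalizer (T : Set G)) :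
    (doubleCoset T g w = doubleCoset T g w' ↔
      (w' * w⁻¹ ∈ Subgroup.centralizer {g} ∧ w' * w⁻¹ ∈ Subgroup.normalizer (T : Set G))) ∧
    (doubleCoset T g w = doubleCoset T g w' ∨
      doubleCoset T g w ∩ doubleCoset T g w' = ∅) := by
  have hnorm : w' * w⁻¹ ∈ Subgroup.normalizer (T : Set G) := mul_mem hw' (inv_mem hw)
  have hself : ∀ u : G, u ∈ doubleCoset T g u := fun u =>
    ⟨1, one_mem _, 1, one_mem _, by group⟩
  constructor
  · constructor
    · intro heq
      have : w' ∈ doubleCoset T g w := heq ▸ hself w'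
      exact ⟨dc_mem_cent T g hTg w w' hw this, hnorm⟩
    · rintro ⟨h1, h2⟩
      exact dc_eq_of_cond T g w w' h1 h2
  · by_cases hdisj : doubleCoset T g w ∩ doubleCoset T g w' = ∅
    · exact Or.inr hdisj
    · left
      obtain ⟨x, hx, hx'⟩ := Set.nonempty_iff_ne_empty.mpr hdisj
      obtain ⟨c, hc, t, ht, rfl⟩ := hx
      obtain ⟨c', hc', t', ht', hx'⟩ := hx'
      have : w' ∈ doubleCoset T g w := by
        refine ⟨c'⁻¹ * c, mul_mem (inv_mem hc') hc, t * t'⁻¹, mul_mem ht (inv_mem ht'), ?_⟩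
        have := hx'
        rw [mul_assoc, mul_assoc] at this ⊢
        -- from c*w*t = c'*w'*t' derive w' = c'⁻¹*c*w*t*t'⁻¹
        have h := congrArg (fun z => c'⁻¹ * z * t'⁻¹) hx'
        simpa [mul_assoc] using h.symm
      exact dc_eq_of_cond T g w w' (dc_mem_cent T g hTg w w' hw this) hnorm
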